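/- Let d ≥ 2, m = ⌊d/2⌋, k = d+m, and n ≥ 1. Let G be a k-partite weighted graph with parts P_1,…,P_k, each identified with [n], with a symmetric real weight w(a,u;b,v) for every u ∈ P_a, v ∈ P_b, a ≠ b. Let W₀ be the maximum absolute value of the weights and M = 100·d^{10}·W₀. Construct a 2d-partite graph G' with parts V_1,…,V_d, V'_1,…,V'_d, each identified with [n], and edge weights w' given by: w'(V_a u, V_b v) = w(a,u;b,v) for 1 ≤ a < b ≤ d; w'(V_a u, V'_i v) = w(a,u; d+i, v) for a ∈ [d], i ∈ [m]; w'(V'_i u, V'_j v) = w(d+i,u; d+j,v) for 1 ≤ i < j ≤ m; w'(V'_i u, V'_{i+m} v) = 0 if u = v and −M otherwise, for i ∈ [m]; w'(V_i u, V'_{i+m} v) = w(i,u; d+i, v) for i ∈ [m]; and all other cross-part pairs have weight 0. Then the maximum over (u_1,…,u_k) ∈ [n]^k of the clique weight Σ_{1≤a<b≤k} w(a,u_a;b,u_b) in G equals the maximum over choices (v_1,…,v_d,v'_1,…,v'_d) ∈ [n]^{2d} of the 2d-subgraph value in G'. -/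

import Mathlib

open Classical in
/-- The `2d`-subgraph value of a choice `σ` of one vertex from each of the `2d` parts
`V_1, …, V_d, V'_1, …, V'_d` (encoded as `Fin d ⊕ Fin d`): the sum of the edge weights over
all unordered pairs of distinct chosen vertices, excluding the `d` matching pairs
`(v_i, v'_i)`.  Each unordered pair is counted once: the weight function is symmetric, so
we sum over ordered pairs and halve. -/
noncomputable def subgraphValue (d n : ℕ)
    (w' : (Fin d ⊕ Fin d) → (Fin d ⊕ Fin d) → Fin n → Fin n → ℝ)
    (σ : (Fin d ⊕ Fin d) → Fin n) : ℝ :=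
  (1 / 2) * ∑ p : Fin d ⊕ Fin d, ∑ q : Fin d ⊕ Fin d,
    if p ≠ q ∧ ¬ ∃ r : Fin d, (p = Sum.inl r ∧ q = Sum.inr r) ∨ (p = Sum.inr r ∧ q = Sum.inl r)
    then w' p q (σ p) (σ q) else 0

private lemma half_double_sum {α : Type*} [Fintype α] (g : α → ℕ)
    (hg : Function.Injective g) (f : α → α → ℝ)
    (hsymm : ∀ p q, f p q = f q p) (hdiag : ∀ p, f p p = 0) :
    (1/2 : ℝ) * (∑ p, ∑ q, f p q) = ∑ p, ∑ q, if g p < g q then f p q else 0 := by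
  have key : ∀ p q : α, f p q
      = (if g p < g q then f p q else 0) + (if g q < g p then f p q else 0) := by
    intro p q
    rcases lt_trichotomy (g p) (g q) with h | h | h
    · rw [if_pos h, if_neg (by omega), add_zero]
    · rw [if_neg (by omega), if_neg (by omega), hg h, hdiag, add_zero]
    · rw [if_neg (by omega), if_pos h, zero_add]
  have e1 : ∑ p, ∑ q, f p q
      = (∑ p, ∑ q, if g p < g q then f p q else 0)
        + (∑ p, ∑ q, if g q < g p then f p q else 0) := by
    rw [← Finset.sum_add_distrib]
    apply Finset.sum_congr rfl; intro p _
    rw [← Finset.sum_add_distrib]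
    exact Finset.sum_congr rfl fun q _ => key p q
  have e2 : (∑ p, ∑ q, if g q < g p then f p q else 0)
      = ∑ p, ∑ q, if g p < g q then f p q else 0 := by
    rw [Finset.sum_comm]
    exact Finset.sum_congr rfl fun p _ => Finset.sum_congr rfl fun q _ =>
      if_congr Iff.rfl (hsymm q p) rfl
  rw [e1, e2]; ring

private lemma sum_fin_lt_eq {d m : ℕ} (hmd : m ≤ d) (f : ℕ → ℝ) :
    (∑ j : Fin d, if j.val < m then f j.val else 0) = ∑ j : Fin m, f j.val := by
  rw [Fin.sum_univ_eq_sum_range (fun x => if x < m then f x else 0) d,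
      Fin.sum_univ_eq_sum_range f m, ← Finset.sum_filter]
  apply Finset.sum_congr _ (fun _ _ => rfl)
  ext x
  simp only [Finset.mem_filter, Finset.mem_range]
  omega

private lemma sum_fin_dlt_eq {d m : ℕ} (hmd : m ≤ d) (f : (x : ℕ) → x < m → ℝ) :
    (∑ j : Fin d, if h : j.val < m then f j.val h else 0) = ∑ j : Fin m, f j.val j.isLt := by
  have h1 : ∀ j : Fin d, (if h : j.val < m then f j.val h else 0)
      = if j.val < m then (if h : j.val < m then f j.val h else 0) else 0 := by
    intro j; by_cases h : j.val < m <;> simp [h]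
  rw [Finset.sum_congr rfl (fun j _ => h1 j),
      sum_fin_lt_eq hmd (fun x => if h : x < m then f x h else 0)]
  exact Finset.sum_congr rfl fun j _ => dif_pos j.isLt



private noncomputable def Epart (d m n : ℕ) (hmd : m ≤ d) (w : ℕ → ℕ → Fin n → Fin n → ℝ)
    (x : Fin d → Fin n) (y : Fin m → Fin n) : ℝ :=
  (∑ a : Fin d, ∑ b : Fin d, if a.val < b.val then w a.val b.val (x a) (x b) else 0)
  + (∑ a : Fin d, ∑ j : Fin m, if a.val ≠ j.val then w a.val (d + j.val) (x a) (y j) else 0)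
  + (∑ i : Fin m, ∑ j : Fin m, if i.val < j.val then w (d + i.val) (d + j.val) (y i) (y j) else 0)
  + (∑ i : Fin m, w i.val (d + i.val) (x ⟨i.val, lt_of_lt_of_le i.isLt hmd⟩) (y i))


set_option maxHeartbeats 2000000 in
/-- Parts of the `k`-partite graph `G` are indexed by natural numbers `0, …, k-1`
(only indices `< k` are relevant for the weight function `w`). -/
theorem stmt_3 (d n : ℕ) (hd : 2 ≤ d) (hn : 1 ≤ n)
    (m k : ℕ) (hm : m = d / 2) (hk : k = d + m)
    (w : ℕ → ℕ → Fin n → Fin n → ℝ)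
    (hwsymm : ∀ a b u v, w a b u v = w b a v u)
    (W₀ M : ℝ)
    (hW₀ : IsGreatest {x : ℝ | ∃ (a b : ℕ) (u v : Fin n),
      a < k ∧ b < k ∧ a ≠ b ∧ x = |w a b u v|} W₀)
    (hM : M = 100 * (d : ℝ) ^ 10 * W₀)
    (w' : (Fin d ⊕ Fin d) → (Fin d ⊕ Fin d) → Fin n → Fin n → ℝ)
    (hw'symm : ∀ p q u v, w' p q u v = w' q p v u)
    (h1 : ∀ a b : Fin d, a.val < b.val → ∀ u v : Fin n,
      w' (Sum.inl a) (Sum.inl b) u v = w a.val b.val u v)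
    (h2 : ∀ a i : Fin d, i.val < m → ∀ u v : Fin n,
      w' (Sum.inl a) (Sum.inr i) u v = w a.val (d + i.val) u v)
    (h3 : ∀ i j : Fin d, i.val < j.val → j.val < m → ∀ u v : Fin n,
      w' (Sum.inr i) (Sum.inr j) u v = w (d + i.val) (d + j.val) u v)
    (h4 : ∀ i j : Fin d, i.val < m → j.val = i.val + m → ∀ u v : Fin n,
      w' (Sum.inr i) (Sum.inr j) u v = if u = v then 0 else -M)
    (h5 : ∀ a j : Fin d, a.val < m → j.val = a.val + m → ∀ u v : Fin n,
      w' (Sum.inl a) (Sum.inr j) u v = w a.val (d + a.val) u v)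
    (h6 : ∀ a j : Fin d, m ≤ j.val → ¬(a.val < m ∧ j.val = a.val + m) → ∀ u v : Fin n,
      w' (Sum.inl a) (Sum.inr j) u v = 0)
    (h7 : ∀ i j : Fin d, i ≠ j → (m ≤ i.val ∨ m ≤ j.val) →
      ¬(i.val < m ∧ j.val = i.val + m) → ¬(j.val < m ∧ i.val = j.val + m) → ∀ u v : Fin n,
      w' (Sum.inr i) (Sum.inr j) u v = 0) :
    sSup {x : ℝ | ∃ u : Fin k → Fin n,
        x = ∑ a : Fin k, ∑ b : Fin k, if a.val < b.val then w a.val b.val (u a) (u b) else 0}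
      = sSup {x : ℝ | ∃ σ : (Fin d ⊕ Fin d) → Fin n, x = subgraphValue d n w' σ} := by
  have hm1 : 1 ≤ m := by omega
  have h2m : m + m ≤ d := by omega
  have hmd : m ≤ d := by omega
  have master : ∀ σ : (Fin d ⊕ Fin d) → Fin n,
      subgraphValue d n w' σ =
        Epart d m n hmd w (fun a => σ (Sum.inl a))
          (fun j => σ (Sum.inr ⟨j.val, lt_of_lt_of_le j.isLt hmd⟩))
        + ∑ i : Fin m,
            ((w i.val (d + i.val) (σ (Sum.inl ⟨i.val, lt_of_lt_of_le i.isLt hmd⟩))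
                (σ (Sum.inr ⟨i.val + m, by have := i.isLt; omega⟩))
              - w i.val (d + i.val) (σ (Sum.inl ⟨i.val, lt_of_lt_of_le i.isLt hmd⟩))
                (σ (Sum.inr ⟨i.val, lt_of_lt_of_le i.isLt hmd⟩)))
            + (if σ (Sum.inr ⟨i.val, lt_of_lt_of_le i.isLt hmd⟩)
                  = σ (Sum.inr ⟨i.val + m, by have := i.isLt; omega⟩) then 0 else -M)) := by
    intro σ
    have hg : Function.Injective (Sum.elim (fun a : Fin d => a.val) (fun i : Fin d => d + i.val)) := by
      intro p q h
      match p, q with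
      | .inl a, .inl b => simp only [Sum.elim_inl] at h; exact congrArg Sum.inl (Fin.ext h)
      | .inl a, .inr j => exact absurd h (by have := a.isLt; simp; omega)
      | .inr i, .inl b => exact absurd h (by have := b.isLt; simp; omega)
      | .inr i, .inr j => simp only [Sum.elim_inr] at h; exact congrArg Sum.inr (Fin.ext (by omega))
    have step1 : subgraphValue d n w' σ = ∑ p : Fin d ⊕ Fin d, ∑ q : Fin d ⊕ Fin d,
        if (Sum.elim (fun a : Fin d => a.val) (fun i : Fin d => d + i.val) p
            < Sum.elim (fun a : Fin d => a.val) (fun i : Fin d => d + i.val) q)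
        then (if p ≠ q ∧ ¬ ∃ r : Fin d,
                (p = Sum.inl r ∧ q = Sum.inr r) ∨ (p = Sum.inr r ∧ q = Sum.inl r)
              then w' p q (σ p) (σ q) else 0) else 0 := by
      unfold subgraphValue
      refine half_double_sum _ hg _ ?_ ?_
      · intro p q
        have hc : (p ≠ q ∧ ¬∃ r : Fin d, (p = Sum.inl r ∧ q = Sum.inr r) ∨ (p = Sum.inr r ∧ q = Sum.inl r))
            ↔ (q ≠ p ∧ ¬∃ r : Fin d, (q = Sum.inl r ∧ p = Sum.inr r) ∨ (q = Sum.inr r ∧ p = Sum.inl r)) := by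
          constructor <;> rintro ⟨hne, hex⟩ <;>
            refine ⟨hne.symm, fun ⟨r, hr⟩ => hex ⟨r, ?_⟩⟩ <;> tauto
        exact if_congr hc (hw'symm p q (σ p) (σ q)) rfl
      · intro p; rw [if_neg]; simp
    rw [step1]
    simp only [Fintype.sum_sum_type, Sum.elim_inl, Sum.elim_inr]
    rw [Finset.sum_add_distrib, Finset.sum_add_distrib]
    have Q1e : (∑ x : Fin d, ∑ y : Fin d,
        if (x : ℕ) < (y : ℕ) then
          (if (Sum.inl x : Fin d ⊕ Fin d) ≠ Sum.inl y ∧ ¬∃ r : Fin d,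
              ((Sum.inl x : Fin d ⊕ Fin d) = Sum.inl r ∧ Sum.inl y = Sum.inr r) ∨
                (Sum.inl x = Sum.inr r ∧ (Sum.inl y : Fin d ⊕ Fin d) = Sum.inl r) then
            w' (Sum.inl x) (Sum.inl y) (σ (Sum.inl x)) (σ (Sum.inl y)) else 0)
        else 0)
        = ∑ x : Fin d, ∑ y : Fin d,
            if x.val < y.val then w x.val y.val (σ (Sum.inl x)) (σ (Sum.inl y)) else 0 := by
      refine Finset.sum_congr rfl fun a _ => Finset.sum_congr rfl fun b _ => ?_
      by_cases hab : a.val < b.val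
      · rw [if_pos hab, if_pos hab, if_pos, h1 a b hab]
        refine ⟨by simp; exact fun h => by omega, ?_⟩
        rintro ⟨r, ⟨hr1, hr2⟩ | ⟨hr1, hr2⟩⟩ <;> simp at hr1 hr2
      · rw [if_neg hab, if_neg hab]
    have Q2e : (∑ x : Fin d, ∑ y : Fin d,
        if (x : ℕ) < d + (y : ℕ) then
          (if (Sum.inl x : Fin d ⊕ Fin d) ≠ Sum.inr y ∧ ¬∃ r : Fin d,
              ((Sum.inl x : Fin d ⊕ Fin d) = Sum.inl r ∧ (Sum.inr y : Fin d ⊕ Fin d) = Sum.inr r) ∨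
                (Sum.inl x = Sum.inr r ∧ Sum.inr y = Sum.inl r) then
            w' (Sum.inl x) (Sum.inr y) (σ (Sum.inl x)) (σ (Sum.inr y)) else 0)
        else 0)
        = (∑ a : Fin d, ∑ j : Fin d,
            if j.val < m ∧ a.val ≠ j.val then
              w a.val (d + j.val) (σ (Sum.inl a)) (σ (Sum.inr j)) else 0)
          + ∑ a : Fin d, (if h : a.val < m then
              w a.val (d + a.val) (σ (Sum.inl a))
                (σ (Sum.inr ⟨a.val + m, by have := a.isLt; omega⟩)) else 0) := by
      have t1 : ∀ a j : Fin d,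
          (if (a : ℕ) < d + (j : ℕ) then
            (if (Sum.inl a : Fin d ⊕ Fin d) ≠ Sum.inr j ∧ ¬∃ r : Fin d,
                ((Sum.inl a : Fin d ⊕ Fin d) = Sum.inl r ∧ (Sum.inr j : Fin d ⊕ Fin d) = Sum.inr r) ∨
                  (Sum.inl a = Sum.inr r ∧ Sum.inr j = Sum.inl r) then
              w' (Sum.inl a) (Sum.inr j) (σ (Sum.inl a)) (σ (Sum.inr j)) else 0)
          else 0)
          = (if j.val < m ∧ a.val ≠ j.val then
              w a.val (d + j.val) (σ (Sum.inl a)) (σ (Sum.inr j)) else 0)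
            + (if j.val = a.val + m ∧ a.val < m then
                w a.val (d + a.val) (σ (Sum.inl a)) (σ (Sum.inr j)) else 0) := by
        intro a j
        rw [if_pos (show (a : ℕ) < d + (j : ℕ) by have := a.isLt; omega)]
        by_cases haj : a = j
        · subst haj
          rw [if_neg (fun hcon => hcon.2 ⟨a, Or.inl ⟨rfl, rfl⟩⟩),
            if_neg (by simp), if_neg (by omega)]
          norm_num
        · have hvals : a.val ≠ j.val := fun h => haj (Fin.ext h)
          have hcond : (Sum.inl a : Fin d ⊕ Fin d) ≠ Sum.inr j ∧ ¬∃ r : Fin d,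
              ((Sum.inl a : Fin d ⊕ Fin d) = Sum.inl r ∧
                (Sum.inr j : Fin d ⊕ Fin d) = Sum.inr r) ∨
                (Sum.inl a = Sum.inr r ∧ Sum.inr j = Sum.inl r) := by
            refine ⟨by simp, ?_⟩
            rintro ⟨r, ⟨hr1, hr2⟩ | ⟨hr1, hr2⟩⟩
            · exact haj (by rw [Sum.inl.inj hr1, Sum.inr.inj hr2])
            · simp at hr1
          rw [if_pos hcond]
          by_cases hjm : j.val < m
          · rw [h2 a j hjm, if_pos ⟨hjm, hvals⟩, if_neg (by omega), add_zero]
          · by_cases hj2 : j.val = a.val + m ∧ a.val < m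
            · rw [h5 a j hj2.2 hj2.1, if_neg (by omega), if_pos hj2, zero_add]
            · rw [h6 a j (by omega) (by omega), if_neg (by omega), if_neg hj2, add_zero]
      have t2 : ∀ a : Fin d,
          (∑ j : Fin d, if j.val = a.val + m ∧ a.val < m then
              w a.val (d + a.val) (σ (Sum.inl a)) (σ (Sum.inr j)) else 0)
          = (if h : a.val < m then
              w a.val (d + a.val) (σ (Sum.inl a))
                (σ (Sum.inr ⟨a.val + m, by have := a.isLt; omega⟩)) else 0) := by
        intro a
        by_cases ham : a.val < m
        · rw [dif_pos ham, Finset.sum_eq_single (⟨a.val + m, by omega⟩ : Fin d)]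
          · rw [if_pos ⟨rfl, ham⟩]
          · intro j _ hj; exact if_neg (fun hc => hj (Fin.ext hc.1))
          · intro h; exact absurd (Finset.mem_univ _) h
        · rw [dif_neg ham]
          exact Finset.sum_eq_zero fun j _ => if_neg (fun hc => ham hc.2)
      calc _ = ∑ a : Fin d, ((∑ j : Fin d,
              if j.val < m ∧ a.val ≠ j.val then
                w a.val (d + j.val) (σ (Sum.inl a)) (σ (Sum.inr j)) else 0)
            + ∑ j : Fin d, (if j.val = a.val + m ∧ a.val < m then
                w a.val (d + a.val) (σ (Sum.inl a)) (σ (Sum.inr j)) else 0)) := by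
            refine Finset.sum_congr rfl fun a _ => ?_
            rw [← Finset.sum_add_distrib]
            exact Finset.sum_congr rfl fun j _ => t1 a j
        _ = _ := by
            rw [Finset.sum_add_distrib]
            congr 1
            exact Finset.sum_congr rfl fun a _ => t2 a
    have Q3e : (∑ x : Fin d, ∑ y : Fin d,
        if d + (x : ℕ) < (y : ℕ) then
          (if (Sum.inr x : Fin d ⊕ Fin d) ≠ Sum.inl y ∧ ¬∃ r : Fin d,
              (Sum.inr x = Sum.inl r ∧ Sum.inl y = Sum.inr r) ∨
                ((Sum.inr x : Fin d ⊕ Fin d) = Sum.inr r ∧ (Sum.inl y : Fin d ⊕ Fin d) = Sum.inl r) then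
            w' (Sum.inr x) (Sum.inl y) (σ (Sum.inr x)) (σ (Sum.inl y)) else 0)
        else 0) = 0 :=
      Finset.sum_eq_zero fun i _ => Finset.sum_eq_zero fun b _ =>
        if_neg (by have := b.isLt; omega)
    have Q4e : (∑ x : Fin d, ∑ y : Fin d,
        if d + (x : ℕ) < d + (y : ℕ) then
          (if (Sum.inr x : Fin d ⊕ Fin d) ≠ Sum.inr y ∧ ¬∃ r : Fin d,
              (Sum.inr x = Sum.inl r ∧ (Sum.inr y : Fin d ⊕ Fin d) = Sum.inr r) ∨
                ((Sum.inr x : Fin d ⊕ Fin d) = Sum.inr r ∧ Sum.inr y = Sum.inl r) then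
            w' (Sum.inr x) (Sum.inr y) (σ (Sum.inr x)) (σ (Sum.inr y)) else 0)
        else 0)
        = (∑ i : Fin d, ∑ j : Fin d,
            if i.val < j.val ∧ j.val < m then
              w (d + i.val) (d + j.val) (σ (Sum.inr i)) (σ (Sum.inr j)) else 0)
          + ∑ i : Fin d, (if h : i.val < m then
              (if σ (Sum.inr i) = σ (Sum.inr ⟨i.val + m, by have := i.isLt; omega⟩)
                then 0 else -M) else 0) := by
      have t1 : ∀ i j : Fin d,
          (if d + (i : ℕ) < d + (j : ℕ) then
            (if (Sum.inr i : Fin d ⊕ Fin d) ≠ Sum.inr j ∧ ¬∃ r : Fin d,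
                (Sum.inr i = Sum.inl r ∧ (Sum.inr j : Fin d ⊕ Fin d) = Sum.inr r) ∨
                  ((Sum.inr i : Fin d ⊕ Fin d) = Sum.inr r ∧ Sum.inr j = Sum.inl r) then
              w' (Sum.inr i) (Sum.inr j) (σ (Sum.inr i)) (σ (Sum.inr j)) else 0)
          else 0)
          = (if i.val < j.val ∧ j.val < m then
              w (d + i.val) (d + j.val) (σ (Sum.inr i)) (σ (Sum.inr j)) else 0)
            + (if j.val = i.val + m ∧ i.val < m then
                (if σ (Sum.inr i) = σ (Sum.inr j) then 0 else -M) else 0) := by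
        intro i j
        by_cases hij : i.val < j.val
        · have hij' : i ≠ j := fun h => by rw [h] at hij; exact lt_irrefl _ hij
          have hcond : (Sum.inr i : Fin d ⊕ Fin d) ≠ Sum.inr j ∧ ¬∃ r : Fin d,
              ((Sum.inr i : Fin d ⊕ Fin d) = Sum.inl r ∧
                (Sum.inr j : Fin d ⊕ Fin d) = Sum.inr r) ∨
                ((Sum.inr i : Fin d ⊕ Fin d) = Sum.inr r ∧ Sum.inr j = Sum.inl r) := by
            refine ⟨by simpa using hij', ?_⟩
            rintro ⟨r, ⟨hr1, _⟩ | ⟨_, hr2⟩⟩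
            · simp at hr1
            · simp at hr2
          rw [if_pos (by omega), if_pos hcond]
          by_cases hjm : j.val < m
          · rw [h3 i j hij hjm, if_pos ⟨hij, hjm⟩, if_neg (by omega), add_zero]
          · by_cases hj2 : j.val = i.val + m ∧ i.val < m
            · rw [h4 i j hj2.2 hj2.1, if_pos hj2,
                if_neg (show ¬((i : ℕ) < (j : ℕ) ∧ (j : ℕ) < m) by omega), zero_add]
            · rw [h7 i j hij' (Or.inr (by omega)) (by omega) (by omega),
                if_neg (by omega), if_neg hj2, add_zero]
        · rw [if_neg (by omega), if_neg (by omega), if_neg (by omega)]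
          norm_num
      have t2 : ∀ i : Fin d,
          (∑ j : Fin d, if j.val = i.val + m ∧ i.val < m then
              (if σ (Sum.inr i) = σ (Sum.inr j) then 0 else -M) else 0)
          = (if h : i.val < m then
              (if σ (Sum.inr i) = σ (Sum.inr ⟨i.val + m, by have := i.isLt; omega⟩)
                then 0 else -M) else 0) := by
        intro i
        by_cases him : i.val < m
        · rw [dif_pos him, Finset.sum_eq_single (⟨i.val + m, by omega⟩ : Fin d)]
          · rw [if_pos ⟨rfl, him⟩]
          · intro j _ hj; exact if_neg (fun hc => hj (Fin.ext hc.1))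
          · intro h; exact absurd (Finset.mem_univ _) h
        · rw [dif_neg him]
          exact Finset.sum_eq_zero fun j _ => if_neg (fun hc => him hc.2)
      calc _ = ∑ i : Fin d, ((∑ j : Fin d,
              if i.val < j.val ∧ j.val < m then
                w (d + i.val) (d + j.val) (σ (Sum.inr i)) (σ (Sum.inr j)) else 0)
            + ∑ j : Fin d, (if j.val = i.val + m ∧ i.val < m then
                (if σ (Sum.inr i) = σ (Sum.inr j) then 0 else -M) else 0)) := by
            refine Finset.sum_congr rfl fun i _ => ?_
            rw [← Finset.sum_add_distrib]
            exact Finset.sum_congr rfl fun j _ => t1 i j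
        _ = _ := by
            rw [Finset.sum_add_distrib]
            congr 1
            exact Finset.sum_congr rfl fun i _ => t2 i
    erw [Q1e, Q2e, Q3e, Q4e]
    have C2' : (∑ a : Fin d, ∑ j : Fin d, if ↑j < m ∧ (a:ℕ) ≠ ↑j then
          w ↑a (d + ↑j) (σ (Sum.inl a)) (σ (Sum.inr j)) else 0)
        = ∑ a : Fin d, ∑ j : Fin m, if (a:ℕ) ≠ (j:ℕ) then
            w ↑a (d + ↑j) (σ (Sum.inl a))
              (σ (Sum.inr ⟨↑j, lt_of_lt_of_le j.isLt hmd⟩)) else 0 := by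
      refine Finset.sum_congr rfl fun a _ => ?_
      refine Eq.trans ?_ (sum_fin_dlt_eq hmd (fun t ht => if (a:ℕ) ≠ t then
        w ↑a (d + t) (σ (Sum.inl a)) (σ (Sum.inr ⟨t, lt_of_lt_of_le ht hmd⟩)) else 0))
      refine Finset.sum_congr rfl fun j _ => ?_
      by_cases h : (j:ℕ) < m
      · rw [dif_pos h]
        by_cases h2 : (a:ℕ) ≠ (j:ℕ)
        · rw [if_pos ⟨h, h2⟩, if_pos h2]
        · rw [if_neg (by tauto), if_neg h2]
      · rw [dif_neg h, if_neg (by tauto)]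
    have C3' : (∑ i : Fin d, ∑ j : Fin d, if (i:ℕ) < ↑j ∧ ↑j < m then
          w (d + ↑i) (d + ↑j) (σ (Sum.inr i)) (σ (Sum.inr j)) else 0)
        = ∑ i : Fin m, ∑ j : Fin m, if (i:ℕ) < (j:ℕ) then
            w (d + ↑i) (d + ↑j) (σ (Sum.inr ⟨↑i, lt_of_lt_of_le i.isLt hmd⟩))
              (σ (Sum.inr ⟨↑j, lt_of_lt_of_le j.isLt hmd⟩)) else 0 := by
      refine Eq.trans ?_ (sum_fin_dlt_eq hmd (fun t ht => ∑ j : Fin m,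
        if t < (j:ℕ) then w (d + t) (d + ↑j) (σ (Sum.inr ⟨t, lt_of_lt_of_le ht hmd⟩))
          (σ (Sum.inr ⟨↑j, lt_of_lt_of_le j.isLt hmd⟩)) else 0))
      refine Finset.sum_congr rfl fun i _ => ?_
      by_cases hi : (i:ℕ) < m
      · rw [dif_pos hi]
        refine Eq.trans ?_ (sum_fin_dlt_eq hmd (fun t ht => if (i:ℕ) < t then
          w (d + ↑i) (d + t) (σ (Sum.inr i)) (σ (Sum.inr ⟨t, lt_of_lt_of_le ht hmd⟩)) else 0))
        refine Finset.sum_congr rfl fun j _ => ?_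
        by_cases hj : (j:ℕ) < m
        · rw [dif_pos hj]
          by_cases hij : (i:ℕ) < (j:ℕ)
          · rw [if_pos ⟨hij, hj⟩, if_pos hij]
          · rw [if_neg (by tauto), if_neg hij]
        · rw [dif_neg hj, if_neg (by tauto)]
      · rw [dif_neg hi]
        exact Finset.sum_eq_zero fun j _ => if_neg (by omega)
    have C4a' : (∑ a : Fin d, if h : (a:ℕ) < m then
          w ↑a (d + ↑a) (σ (Sum.inl a))
            (σ (Sum.inr ⟨↑a + m, by have := a.isLt; omega⟩)) else 0)
        = ∑ i : Fin m, w ↑i (d + ↑i) (σ (Sum.inl ⟨↑i, lt_of_lt_of_le i.isLt hmd⟩))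
            (σ (Sum.inr ⟨↑i + m, by have := i.isLt; omega⟩)) :=
      sum_fin_dlt_eq hmd (fun t ht => w t (d + t)
        (σ (Sum.inl ⟨t, lt_of_lt_of_le ht hmd⟩)) (σ (Sum.inr ⟨t + m, by omega⟩)))
    have C4b' : (∑ i : Fin d, if h : (i:ℕ) < m then
          (if σ (Sum.inr i) = σ (Sum.inr ⟨↑i + m, by have := i.isLt; omega⟩)
            then 0 else -M) else 0)
        = ∑ i : Fin m, (if σ (Sum.inr ⟨↑i, lt_of_lt_of_le i.isLt hmd⟩)
            = σ (Sum.inr ⟨↑i + m, by have := i.isLt; omega⟩) then 0 else -M) :=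
      sum_fin_dlt_eq hmd (fun t ht => if σ (Sum.inr ⟨t, lt_of_lt_of_le ht hmd⟩)
        = σ (Sum.inr ⟨t + m, by omega⟩) then 0 else -M)
    rw [C2', C3', C4a', C4b']
    simp only [Epart]
    simp only [Finset.sum_add_distrib, Finset.sum_sub_distrib]
    ring
  have clique : ∀ u : Fin (d + m) → Fin n,
      (∑ a : Fin (d + m), ∑ b : Fin (d + m), if (a:ℕ) < (b:ℕ) then w ↑a ↑b (u a) (u b) else 0)
      = Epart d m n hmd w (fun a => u (Fin.castAdd m a)) (fun j => u (Fin.natAdd d j)) := by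
    intro u
    simp only [Fin.sum_univ_add, Fin.coe_castAdd, Fin.coe_natAdd]
    rw [Finset.sum_add_distrib, Finset.sum_add_distrib]
    have QB : (∑ a : Fin d, ∑ j : Fin m, if (a:ℕ) < d + (j:ℕ) then
          w ↑a (d + ↑j) (u (Fin.castAdd m a)) (u (Fin.natAdd d j)) else 0)
        = (∑ a : Fin d, ∑ j : Fin m, if (a:ℕ) ≠ (j:ℕ) then
            w ↑a (d + ↑j) (u (Fin.castAdd m a)) (u (Fin.natAdd d j)) else 0)
          + ∑ j : Fin m, w ↑j (d + ↑j)
              (u (Fin.castAdd m ⟨↑j, lt_of_lt_of_le j.isLt hmd⟩)) (u (Fin.natAdd d j)) := by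
      have t1 : ∀ a : Fin d, ∀ j : Fin m, (if (a:ℕ) < d + (j:ℕ) then
          w ↑a (d + ↑j) (u (Fin.castAdd m a)) (u (Fin.natAdd d j)) else 0)
          = (if (a:ℕ) ≠ (j:ℕ) then
              w ↑a (d + ↑j) (u (Fin.castAdd m a)) (u (Fin.natAdd d j)) else 0)
            + (if (a:ℕ) = (j:ℕ) then
                w ↑a (d + ↑j) (u (Fin.castAdd m a)) (u (Fin.natAdd d j)) else 0) := by
        intro a j
        rw [if_pos (by have := a.isLt; omega)]
        by_cases h : (a:ℕ) = (j:ℕ) <;> simp [h]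
      calc _ = ∑ a : Fin d, ((∑ j : Fin m, if (a:ℕ) ≠ (j:ℕ) then
              w ↑a (d + ↑j) (u (Fin.castAdd m a)) (u (Fin.natAdd d j)) else 0)
            + ∑ j : Fin m, if (a:ℕ) = (j:ℕ) then
                w ↑a (d + ↑j) (u (Fin.castAdd m a)) (u (Fin.natAdd d j)) else 0) := by
            refine Finset.sum_congr rfl fun a _ => ?_
            rw [← Finset.sum_add_distrib]
            exact Finset.sum_congr rfl fun j _ => t1 a j
        _ = _ := by
            rw [Finset.sum_add_distrib]
            congr 1
            rw [Finset.sum_comm]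
            refine Finset.sum_congr rfl fun j _ => ?_
            rw [Finset.sum_eq_single (⟨(j:ℕ), lt_of_lt_of_le j.isLt hmd⟩ : Fin d)]
            · rw [if_pos rfl]
            · intro a _ ha; exact if_neg (fun hc => ha (Fin.ext hc))
            · intro h; exact absurd (Finset.mem_univ _) h
    have QC : (∑ i : Fin m, ∑ b : Fin d, if d + (i:ℕ) < (b:ℕ) then
          w (d + ↑i) ↑b (u (Fin.natAdd d i)) (u (Fin.castAdd m b)) else 0) = 0 :=
      Finset.sum_eq_zero fun i _ => Finset.sum_eq_zero fun b _ =>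
        if_neg (by have := b.isLt; omega)
    have QD : (∑ i : Fin m, ∑ j : Fin m, if d + (i:ℕ) < d + (j:ℕ) then
          w (d + ↑i) (d + ↑j) (u (Fin.natAdd d i)) (u (Fin.natAdd d j)) else 0)
        = ∑ i : Fin m, ∑ j : Fin m, if (i:ℕ) < (j:ℕ) then
            w (d + ↑i) (d + ↑j) (u (Fin.natAdd d i)) (u (Fin.natAdd d j)) else 0 :=
      Finset.sum_congr rfl fun i _ => Finset.sum_congr rfl fun j _ =>
        if_congr (by omega) rfl rfl
    rw [QB, QC, QD]
    simp only [Epart]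
    ring
  subst hk
  obtain ⟨⟨a₀, b₀, u₀, v₀, _, _, _, hW0eq⟩, hub⟩ := hW₀
  have hW₀0 : 0 ≤ W₀ := by rw [hW0eq]; exact abs_nonneg _
  have hwle : ∀ (a b : ℕ), a < d + m → b < d + m → a ≠ b → ∀ (x y : Fin n),
      |w a b x y| ≤ W₀ := fun a b ha hb hab x y => hub ⟨a, b, x, y, ha, hb, hab, rfl⟩
  have hM2 : 2 * W₀ ≤ M := by
    rw [hM]
    have hd1 : (2:ℝ) ≤ (d:ℝ) := by exact_mod_cast hd
    have hp : (2:ℝ) ≤ (d:ℝ) ^ 10 := by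
      calc (2:ℝ) ≤ (d:ℝ) := hd1
        _ = (d:ℝ) ^ 1 := (pow_one _).symm
        _ ≤ (d:ℝ) ^ 10 := pow_le_pow_right₀ (by linarith) (by norm_num)
    nlinarith [hW₀0, hp]
  have key1 : ∀ u : Fin (d + m) → Fin n, ∃ σ : (Fin d ⊕ Fin d) → Fin n,
      (∑ a : Fin (d + m), ∑ b : Fin (d + m),
        if (a:ℕ) < (b:ℕ) then w ↑a ↑b (u a) (u b) else 0) = subgraphValue d n w' σ := by
    intro u
    refine ⟨Sum.elim (fun a => u (Fin.castAdd m a))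
      (fun i => u (Fin.natAdd d ⟨i.val % m, Nat.mod_lt _ (by omega)⟩)), ?_⟩
    set σ0 : (Fin d ⊕ Fin d) → Fin n := Sum.elim (fun a => u (Fin.castAdd m a))
      (fun i => u (Fin.natAdd d ⟨i.val % m, Nat.mod_lt _ (by omega)⟩)) with hσ0
    rw [master σ0, clique u]
    have hy : ∀ j : Fin m, σ0 (Sum.inr ⟨(j:ℕ), lt_of_lt_of_le j.isLt hmd⟩)
        = u (Fin.natAdd d j) := by
      intro j
      rw [hσ0]
      simp only [Sum.elim_inr]
      congr 1
      exact Fin.ext (by simp [Nat.mod_eq_of_lt j.isLt])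
    have hgood : ∀ i : Fin m, σ0 (Sum.inr ⟨(i:ℕ) + m, by have := i.isLt; omega⟩)
        = u (Fin.natAdd d i) := by
      intro i
      rw [hσ0]
      simp only [Sum.elim_inr]
      congr 1
      exact Fin.ext (by simp [Nat.add_mod_right, Nat.mod_eq_of_lt i.isLt])
    have hE : Epart d m n hmd w (fun a => σ0 (Sum.inl a))
        (fun j => σ0 (Sum.inr ⟨(j:ℕ), lt_of_lt_of_le j.isLt hmd⟩))
        = Epart d m n hmd w (fun a => u (Fin.castAdd m a)) (fun j => u (Fin.natAdd d j)) := by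
      congr 1
      funext j
      exact hy j
    have hcorr : ∑ i : Fin m,
        ((w ↑i (d + ↑i) (σ0 (Sum.inl ⟨↑i, lt_of_lt_of_le i.isLt hmd⟩))
            (σ0 (Sum.inr ⟨↑i + m, by have := i.isLt; omega⟩))
          - w ↑i (d + ↑i) (σ0 (Sum.inl ⟨↑i, lt_of_lt_of_le i.isLt hmd⟩))
            (σ0 (Sum.inr ⟨↑i, lt_of_lt_of_le i.isLt hmd⟩)))
        + (if σ0 (Sum.inr ⟨↑i, lt_of_lt_of_le i.isLt hmd⟩)
              = σ0 (Sum.inr ⟨↑i + m, by have := i.isLt; omega⟩) then 0 else -M)) = 0 :=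
      Finset.sum_eq_zero fun i _ => by rw [hgood i, hy i]; simp
    linarith [hE, hcorr]
  have key2 : ∀ σ : (Fin d ⊕ Fin d) → Fin n, ∃ u : Fin (d + m) → Fin n,
      subgraphValue d n w' σ ≤ ∑ a : Fin (d + m), ∑ b : Fin (d + m),
        if (a:ℕ) < (b:ℕ) then w ↑a ↑b (u a) (u b) else 0 := by
    intro σ
    refine ⟨fun a => if h : (a:ℕ) < d then σ (Sum.inl ⟨(a:ℕ), h⟩)
      else σ (Sum.inr ⟨(a:ℕ) - d, by have := a.isLt; omega⟩), ?_⟩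
    set u : Fin (d + m) → Fin n := fun a => if h : (a:ℕ) < d then σ (Sum.inl ⟨(a:ℕ), h⟩)
      else σ (Sum.inr ⟨(a:ℕ) - d, by have := a.isLt; omega⟩) with hu
    rw [master σ, clique u]
    have hx : ∀ a : Fin d, u (Fin.castAdd m a) = σ (Sum.inl a) := by
      intro a
      show dite _ _ _ = _
      rw [dif_pos (show ((Fin.castAdd m a : Fin (d+m)) : ℕ) < d from a.isLt)]
      rfl
    have hy : ∀ j : Fin m, u (Fin.natAdd d j)
        = σ (Sum.inr ⟨(j:ℕ), lt_of_lt_of_le j.isLt hmd⟩) := by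
      intro j
      show dite _ _ _ = _
      rw [dif_neg (show ¬ ((Fin.natAdd d j : Fin (d+m)) : ℕ) < d by simp)]
      congr 1
      exact congrArg Sum.inr (Fin.ext (by simp))
    have hE : Epart d m n hmd w (fun a => u (Fin.castAdd m a)) (fun j => u (Fin.natAdd d j))
        = Epart d m n hmd w (fun a => σ (Sum.inl a))
          (fun j => σ (Sum.inr ⟨(j:ℕ), lt_of_lt_of_le j.isLt hmd⟩)) := by
      congr 1
      · funext a; exact hx a
      · funext j; exact hy j
    have hcorr : ∑ i : Fin m,
        ((w ↑i (d + ↑i) (σ (Sum.inl ⟨↑i, lt_of_lt_of_le i.isLt hmd⟩))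
            (σ (Sum.inr ⟨↑i + m, by have := i.isLt; omega⟩))
          - w ↑i (d + ↑i) (σ (Sum.inl ⟨↑i, lt_of_lt_of_le i.isLt hmd⟩))
            (σ (Sum.inr ⟨↑i, lt_of_lt_of_le i.isLt hmd⟩)))
        + (if σ (Sum.inr ⟨↑i, lt_of_lt_of_le i.isLt hmd⟩)
              = σ (Sum.inr ⟨↑i + m, by have := i.isLt; omega⟩) then 0 else -M)) ≤ 0 := by
      refine Finset.sum_nonpos fun i _ => ?_
      by_cases hc : σ (Sum.inr ⟨↑i, lt_of_lt_of_le i.isLt hmd⟩)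
          = σ (Sum.inr ⟨↑i + m, by have := i.isLt; omega⟩)
      · rw [if_pos hc, hc]
        simp
      · rw [if_neg hc]
        have b1 := hwle ↑i (d + ↑i) (by have := i.isLt; omega) (by have := i.isLt; omega)
          (by omega) (σ (Sum.inl ⟨↑i, lt_of_lt_of_le i.isLt hmd⟩))
          (σ (Sum.inr ⟨↑i + m, by have := i.isLt; omega⟩))
        have b2 := hwle ↑i (d + ↑i) (by have := i.isLt; omega) (by have := i.isLt; omega)
          (by omega) (σ (Sum.inl ⟨↑i, lt_of_lt_of_le i.isLt hmd⟩))
          (σ (Sum.inr ⟨↑i, lt_of_lt_of_le i.isLt hmd⟩))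
        rw [abs_le] at b1 b2
        linarith [hM2, b1.1, b1.2, b2.1, b2.2]
    linarith [hE, hcorr]
  have hAb : BddAbove {x : ℝ | ∃ u : Fin (d + m) → Fin n,
      x = ∑ a : Fin (d + m), ∑ b : Fin (d + m),
        if (a:ℕ) < (b:ℕ) then w ↑a ↑b (u a) (u b) else 0} := by
    have he : {x : ℝ | ∃ u : Fin (d + m) → Fin n,
        x = ∑ a : Fin (d + m), ∑ b : Fin (d + m),
          if (a:ℕ) < (b:ℕ) then w ↑a ↑b (u a) (u b) else 0}
        = Set.range (fun u : Fin (d + m) → Fin n => ∑ a : Fin (d + m), ∑ b : Fin (d + m),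
          if (a:ℕ) < (b:ℕ) then w ↑a ↑b (u a) (u b) else 0) := by
      ext x
      simp only [Set.mem_setOf_eq, Set.mem_range]
      exact ⟨fun ⟨u, h⟩ => ⟨u, h.symm⟩, fun ⟨u, h⟩ => ⟨u, h.symm⟩⟩
    rw [he]
    exact (Set.finite_range _).bddAbove
  have hBb : BddAbove {x : ℝ | ∃ σ : (Fin d ⊕ Fin d) → Fin n, x = subgraphValue d n w' σ} := by
    have he : {x : ℝ | ∃ σ : (Fin d ⊕ Fin d) → Fin n, x = subgraphValue d n w' σ}
        = Set.range (fun σ : (Fin d ⊕ Fin d) → Fin n => subgraphValue d n w' σ) := by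
      ext x
      simp only [Set.mem_setOf_eq, Set.mem_range]
      exact ⟨fun ⟨σ, h⟩ => ⟨σ, h.symm⟩, fun ⟨σ, h⟩ => ⟨σ, h.symm⟩⟩
    rw [he]
    exact (Set.finite_range _).bddAbove
  have hv0 : Fin n := ⟨0, by omega⟩
  apply le_antisymm
  · refine csSup_le ⟨_, (fun _ => hv0 : Fin (d + m) → Fin n), rfl⟩ ?_
    rintro x ⟨u, rfl⟩
    obtain ⟨σ, hσ⟩ := key1 u
    rw [hσ]
    exact le_csSup hBb ⟨σ, rfl⟩
  · refine csSup_le ⟨_, (fun _ => hv0 : (Fin d ⊕ Fin d) → Fin n), rfl⟩ ?_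
    rintro x ⟨σ, rfl⟩
    obtain ⟨u, hu⟩ := key2 σ
    exact le_trans hu (le_csSup hAb ⟨u, rfl⟩)
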